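/- If x is a complex number satisfying x² = x, then x = 0 or x = 1. Consequently, if an isometry V on a Hilbert space satisfies V(ψ⊗ψ) = ψ⊗e for all unit vectors ψ (with a fixed unit vector e), then any two unit vectors ψ, φ satisfy ⟨ψ,φ⟩ ∈ {0, 1}. -/
import Mathlib


open scoped ComplexInnerProductSpace

/-- (i) `x² = x` forces `x ∈ {0, 1}` in ℂ; (ii) consequently, if a
linear isometry `V` on the (Hilbert) tensor square satisfies `V(ψ ⊗ ψ) = ψ ⊗ e`
for all unit vectors `ψ`, then any two unit vectors have overlap in `{0, 1}`.
Since Mathlib has no Hilbert tensor product, the tensor square is abstracted as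
a Hilbert space `K` together with a bilinear map `t` satisfying the
characteristic identity `⟨t x y, t x' y'⟩ = ⟨x, x'⟩ * ⟨y, y'⟩`. -/
theorem stmt9 {H K : Type*} [NormedAddCommGroup H] [InnerProductSpace ℂ H]
    [NormedAddCommGroup K] [InnerProductSpace ℂ K] [CompleteSpace H] [CompleteSpace K]
    (hdim : 2 ≤ Module.rank ℂ H)
    (t : H →ₗ[ℂ] H →ₗ[ℂ] K)
    (ht : ∀ x y x' y' : H, ⟪t x y, t x' y'⟫ = ⟪x, x'⟫ * ⟪y, y'⟫)
    (e : H) (he : ‖e‖ = 1)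
    (V : K →ₗ[ℂ] K) (hV : ∀ x y : K, ⟪V x, V y⟫ = ⟪x, y⟫)
    (hdel : ∀ ψ : H, ‖ψ‖ = 1 → V (t ψ ψ) = t ψ e) :
    (∀ x : ℂ, x ^ 2 = x → x = 0 ∨ x = 1) ∧
      (∀ ψ φ : H, ‖ψ‖ = 1 → ‖φ‖ = 1 → ⟪ψ, φ⟫ = 0 ∨ ⟪ψ, φ⟫ = 1) := by
  have part1 : ∀ x : ℂ, x ^ 2 = x → x = 0 ∨ x = 1 := by
    intro x hx
    have : x * (x - 1) = 0 := by ring_nf; linear_combination hx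
    rcases mul_eq_zero.mp this with h | h
    · exact Or.inl h
    · exact Or.inr (sub_eq_zero.mp h)
  refine ⟨part1, ?_⟩
  intro ψ φ hψ hφ
  have hee : ⟪e, e⟫ = 1 := by
    rw [inner_self_eq_norm_sq_to_K, he]; norm_num
  have key : ⟪ψ, φ⟫ ^ 2 = ⟪ψ, φ⟫ := by
    have h1 : ⟪V (t ψ ψ), V (t φ φ)⟫ = ⟪ψ, φ⟫ * ⟪ψ, φ⟫ := by
      rw [hV, ht]
    have h2 : ⟪V (t ψ ψ), V (t φ φ)⟫ = ⟪ψ, φ⟫ * 1 := by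
      rw [hdel ψ hψ, hdel φ hφ, ht, hee]
    rw [h2] at h1
    linear_combination -h1
  exact part1 _ key
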